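/- arXiv:1812.07755 — 2 statements merged into one kernel-verified Lean document; each statement's English description precedes it below -/
import Mathlib

section
/- Let $f \in \mathbb{R}[X]$ be a polynomial and let $m, d \in \mathbb{N}$ be such that $f(X-1) = (-1)^m f(-X)$ holds as an identity of polynomials. In the field $\mathbb{R}(t)$ of rational functions, define $c = \big(\tfrac{-t}{1-t^2}\big)^d \cdot f\big(\tfrac{t^2}{1-t^2}\big)$, where $f$ is evaluated at the rational function $t^2/(1-t^2)$. Let $\iota : \mathbb{R}(t) \to \mathbb{R}(t)$ be the $\mathbb{R}$-algebra field homomorphism determined by $t \mapsto t^{-1}$. Then $\iota(c) = (-1)^{d+m}\, c$; that is, $c$ satisfies the reciprocity $c(t^{-1}) = (-1)^{n} c(t)$ with $n = d + m$. -/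
/-- **Reciprocity of the coefficients `c_{xy}`.**
If a real polynomial `f` satisfies the Dehn–Sommerville-type relation
`f(X - 1) = (-1)^m f(-X)`, and `c = (-t/(1-t²))^d · f(t²/(1-t²)) ∈ ℝ(t)`, then under
the `ℝ`-algebra endomorphism `ι` of `ℝ(t)` determined by `t ↦ t⁻¹` one has
`ι(c) = (-1)^(d+m) · c`, i.e. `c(t⁻¹) = (-1)ⁿ c(t)` with `n = d + m`. -/
theorem reciprocity_of_coefficients
    (f : Polynomial ℝ) (m d : ℕ)
    (hf : f.comp (Polynomial.X - 1) = (-1 : Polynomial ℝ) ^ m * f.comp (-Polynomial.X))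
    (c : RatFunc ℝ)
    (hc : c = (-(RatFunc.X : RatFunc ℝ) / (1 - RatFunc.X ^ 2)) ^ d *
        Polynomial.aeval (((RatFunc.X : RatFunc ℝ) ^ 2) / (1 - RatFunc.X ^ 2)) f)
    (ι : RatFunc ℝ →ₐ[ℝ] RatFunc ℝ) (hι : ι RatFunc.X = (RatFunc.X : RatFunc ℝ)⁻¹) :
    ι c = (-1) ^ (d + m) * c := by
  set X : RatFunc ℝ := RatFunc.X with hXdef
  have hX : X ≠ 0 := RatFunc.X_ne_zero
  have hden : 1 - X ^ 2 ≠ 0 := by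
    have : (1 - Polynomial.X ^ 2 : Polynomial ℝ) ≠ 0 := by
      intro h
      have := congrArg (Polynomial.eval 0) h
      simp at this
    simpa [RatFunc.algebraMap_X] using
      (map_ne_zero_iff (algebraMap (Polynomial ℝ) (RatFunc ℝ))
        (IsFractionRing.injective _ _)).mpr this
  set u : RatFunc ℝ := X ^ 2 / (1 - X ^ 2) with hu
  set v : RatFunc ℝ := -X / (1 - X ^ 2) with hv
  -- polynomial identity: f.comp (-X - 1) = (-1)^m • f
  have hf' : f.comp (-Polynomial.X - 1) = (-1 : Polynomial ℝ) ^ m * f := by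
    have h := congrArg (fun p => p.comp (-Polynomial.X)) hf
    simp only [Polynomial.mul_comp, Polynomial.pow_comp, Polynomial.neg_comp,
      Polynomial.one_comp, Polynomial.sub_comp, Polynomial.X_comp] at h
    rw [Polynomial.comp_assoc, Polynomial.comp_assoc] at h
    simpa [Polynomial.sub_comp, Polynomial.neg_comp, Polynomial.one_comp,
      Polynomial.X_comp] using h
  have hden2 : X ^ 2 - 1 ≠ 0 := fun h => hden (by linear_combination -h)
  have hden3 : X ^ 3 - X ≠ 0 := by
    intro h
    apply hden2
    have := mul_left_cancel₀ hX (by linear_combination h : X * (X ^ 2 - 1) = X * 0)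
    simpa using this
  have hιu : ι u = -u - 1 := by
    rw [hu, map_div₀, map_pow, map_sub, map_one, map_pow, hι]
    field_simp [hden2, hden3]
    ring
  have hιv : ι v = -v := by
    rw [hv, map_div₀, map_neg, map_sub, map_one, map_pow, hι]
    field_simp [hden2, hden3]
    ring
  have haev : Polynomial.aeval (-u - 1) f = (-1 : RatFunc ℝ) ^ m * Polynomial.aeval u f := by
    have h1 : Polynomial.aeval u (f.comp (-Polynomial.X - 1)) = Polynomial.aeval (-u - 1) f := by
      rw [Polynomial.aeval_comp]; simp
    have h2 := congrArg (Polynomial.aeval u) hf'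
    rw [h1] at h2
    simpa using h2
  rw [hc, map_mul, map_pow, hιv, ← Polynomial.aeval_algHom_apply, hιu, haev]
  rw [neg_pow]
  ring
end

section
/- Let $S$ be a finite type and let $d : S \times S \to \mathbb{N}$ be a function satisfying $d(x,y) = 0$ if and only if $x = y$. Then for every $x \in S$ there exists a unique family of coefficients $(c_y)_{y \in S}$ in the field $\mathbb{R}(t)$ of rational functions such that for all $z \in S$: $\sum_{y \in S} c_y \, t^{d(y,z)} = 1$ if $z = x$ and $= 0$ otherwise. Equivalently, the characteristic function of $\{x\}$ is a unique $\mathbb{R}(t)$-linear combination of the functions $h_y : S \to \mathbb{R}(t)$, $h_y(z) = t^{d(y,z)}$. -/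
/-- **Key lemma (star case).**
Let `S` be a finite type and `d : S × S → ℕ` vanish exactly on the diagonal.  For every
`x ∈ S` the characteristic function of `{x}` is a *unique* `ℝ(t)`-linear combination of
the functions `h_y : z ↦ t^{d(y,z)}`: there is a unique family of coefficients
`(c_y)_{y ∈ S}` in `ℝ(t)` with `∑_y c_y t^{d(y,z)} = δ_{zx}` for all `z`. -/
theorem char_fun_unique_combination
    (S : Type*) [Fintype S] [DecidableEq S]
    (d : S × S → ℕ) (hd : ∀ x y : S, d (x, y) = 0 ↔ x = y) (x : S) :
    ∃! c : S → RatFunc ℝ, ∀ z : S,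
      ∑ y : S, c y * (RatFunc.X : RatFunc ℝ) ^ d (y, z) =
        if z = x then 1 else 0 := by
  classical
  -- The polynomial matrix
  set N : Matrix S S (Polynomial ℝ) := fun y z => Polynomial.X ^ d (y, z) with hN
  set φ : Polynomial ℝ →+* RatFunc ℝ := algebraMap (Polynomial ℝ) (RatFunc ℝ) with hφ
  set M : Matrix S S (RatFunc ℝ) := N.map φ with hM
  -- determinant of N evaluated at 0 is 1
  have hmapdet : ∀ {R : Type} [inst : CommRing R] (f : Polynomial ℝ →+* R),
      f N.det = (N.map f).det := by
    intro R _ f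
    have h := RingHom.map_det f N
    rwa [show f.mapMatrix N = N.map f from rfl] at h
  have heval : (N.map (Polynomial.evalRingHom (0 : ℝ))) = (1 : Matrix S S ℝ) := by
    ext y z
    simp only [Matrix.map_apply, hN, Polynomial.coe_evalRingHom, Polynomial.eval_pow,
      Polynomial.eval_X, Matrix.one_apply]
    by_cases h : y = z
    · simp [Matrix.map, h, (hd z z).mpr rfl]
    · have : d (y, z) ≠ 0 := fun h0 => h ((hd y z).mp h0)
      simp [Matrix.map, h, zero_pow this]
  have hdetN : N.det ≠ 0 := by
    intro h0
    have := congrArg Matrix.det heval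
    rw [Matrix.det_one, ← hmapdet, h0] at this
    simp at this
  have hdetM : M.det ≠ 0 := by
    rw [hM, ← hmapdet]
    intro h0
    exact hdetN ((map_eq_zero_iff φ (RatFunc.algebraMap_injective ℝ)).mp h0)
  have hMunit : IsUnit M.det := isUnit_iff_ne_zero.mpr hdetM
  -- rewrite the condition as a vecMul equation
  have key : ∀ c : S → RatFunc ℝ,
      (∀ z : S, ∑ y : S, c y * (RatFunc.X : RatFunc ℝ) ^ d (y, z) =
        if z = x then 1 else 0) ↔ Matrix.vecMul c M = Pi.single x 1 := by
    intro c
    constructor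
    · intro h
      funext z
      rw [Matrix.vecMul, Pi.single_apply]
      simpa [dotProduct, hM, hN, hφ, Matrix.map, Matrix.map_apply, RatFunc.algebraMap_eq_C,
        map_pow] using h z
    · intro h z
      have := congrFun h z
      rw [Matrix.vecMul, Pi.single_apply] at this
      simpa [dotProduct, hM, hN, hφ, Matrix.map, Matrix.map_apply, RatFunc.algebraMap_eq_C,
        map_pow] using this
  refine ⟨Matrix.vecMul (Pi.single x 1) M⁻¹, (key _).mpr ?_, ?_⟩
  · rw [Matrix.vecMul_vecMul, Matrix.nonsing_inv_mul M hMunit, Matrix.vecMul_one]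
  · intro c hc
    rw [key] at hc
    calc c = Matrix.vecMul c (M * M⁻¹) := by
            rw [Matrix.mul_nonsing_inv M hMunit, Matrix.vecMul_one]
      _ = Matrix.vecMul (Pi.single x 1) M⁻¹ := by
            rw [← Matrix.vecMul_vecMul, hc]
end
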